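/- The right S-act S is strongly Hopfian if and only if for every s ∈ S there exists n ∈ N such that r(s^n) = r(s^{n+1}), where r(t) = {(x,y) ∈ S × S : tx = ty}. -/
import Mathlib


structure RAct (S : Type*) [Monoid S] (A : Type*) where
  act : A → S → A
  act_one : ∀ a, act a 1 = a
  act_mul : ∀ a s t, act a (s * t) = act (act a s) t

variable {S : Type*} [Monoid S] {A B : Type*}

/-- `f` is an S-act homomorphism from `M` to `N`. -/
def IsHom (M : RAct S A) (N : RAct S B) (f : A → B) : Prop :=
  ∀ a s, f (M.act a s) = N.act (f a) s

/-- `f` is an S-act endomorphism of `M`. -/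
def IsEnd (M : RAct S A) (f : A → A) : Prop := IsHom M M f

/-- `r` is a congruence on the S-act `M`. -/
def IsCong (M : RAct S A) (r : A → A → Prop) : Prop :=
  Equivalence r ∧ ∀ a b s, r a b → r (M.act a s) (M.act b s)

/-- The kernel congruence `K_f`. -/
def kerC {A : Type*} (f : A → A) : A → A → Prop := fun a b => f a = f b

/-- The image congruence `I_f = (im f × im f) ∪ Δ`. -/
def imC {A : Type*} (f : A → A) : A → A → Prop :=
  fun a b => a = b ∨ (a ∈ Set.range f ∧ b ∈ Set.range f)

/-- The diagonal relation. -/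
def diagR (A : Type*) : A → A → Prop := fun a b => a = b

/-- The full relation. -/
def fullR (A : Type*) : A → A → Prop := fun _ _ => True

/-- `M` is strongly Hopfian: the chain `K_f ⊆ K_{f²} ⊆ ⋯` stabilizes for every endomorphism. -/
def StronglyHopfian (M : RAct S A) : Prop :=
  ∀ f : A → A, IsEnd M f → ∃ n : ℕ, 1 ≤ n ∧ ∀ m, n ≤ m → kerC (f^[m]) = kerC (f^[n])

/-- `M` is strongly co-Hopfian: the chain `I_f ⊇ I_{f²} ⊇ ⋯` stabilizes for every endomorphism. -/
def StronglyCoHopfian (M : RAct S A) : Prop :=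
  ∀ f : A → A, IsEnd M f → ∃ n : ℕ, 1 ≤ n ∧ ∀ m, n ≤ m → imC (f^[m]) = imC (f^[n])

/-- `M` is Hopfian: every surjective endomorphism is injective. -/
def Hopfian (M : RAct S A) : Prop :=
  ∀ f : A → A, IsEnd M f → Function.Surjective f → Function.Injective f

/-- `M` is co-Hopfian: every injective endomorphism is surjective. -/
def CoHopfian (M : RAct S A) : Prop :=
  ∀ f : A → A, IsEnd M f → Function.Injective f → Function.Surjective f

/-- ACC on congruences. -/
def NoetherianAct (M : RAct S A) : Prop :=
  ∀ c : ℕ → (A → A → Prop), (∀ n, IsCong M (c n)) →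
    (∀ n a b, c n a b → c (n + 1) a b) → ∃ N, ∀ m, N ≤ m → c m = c N

/-- DCC on congruences. -/
def ArtinianAct (M : RAct S A) : Prop :=
  ∀ c : ℕ → (A → A → Prop), (∀ n, IsCong M (c n)) →
    (∀ n a b, c (n + 1) a b → c n a b) → ∃ N, ∀ m, N ≤ m → c m = c N

/-- The monoid `S` as a right act over itself. -/
def mulAct (S : Type*) [Monoid S] : RAct S S :=
  ⟨fun x s => x * s, mul_one, fun a s t => (mul_assoc a s t).symm⟩

lemma end_iter {f : S → S} (hf : IsEnd (mulAct S) f) (m : ℕ) (x : S) :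
    f^[m] x = (f 1) ^ m * x := by
  have h1 : ∀ x : S, f x = f 1 * x := fun x => by
    have := hf 1 x; simpa [mulAct] using this
  induction m generalizing x with
  | zero => simp
  | succ k ih =>
      rw [Function.iterate_succ_apply, ih, h1 x, pow_succ, mul_assoc]

lemma stab_pow {a : S} {n : ℕ}
    (h : ∀ x y : S, a ^ n * x = a ^ n * y ↔ a ^ (n + 1) * x = a ^ (n + 1) * y)
    (k : ℕ) : ∀ x y : S, a ^ (n + k) * x = a ^ (n + k) * y ↔ a ^ n * x = a ^ n * y := by
  induction k with
  | zero => simp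
  | succ k ih =>
      intro x y
      constructor
      · intro hxy
        have e : ∀ z : S, a ^ (n + (k + 1)) * z = a ^ (n + 1) * (a ^ k * z) := by
          intro z
          rw [← mul_assoc, ← pow_add, show (n + 1) + k = n + (k + 1) from by omega]
        rw [e, e] at hxy
        have h2 := (h (a ^ k * x) (a ^ k * y)).mpr hxy
        rw [← mul_assoc, ← mul_assoc, ← pow_add] at h2
        exact (ih x y).mp h2
      · intro hxy
        have : a ^ (n + (k + 1)) * x = a ^ (k + 1) * (a ^ n * x) := by
          rw [← mul_assoc, ← pow_add]; ring_nf
        rw [this, hxy, ← mul_assoc, ← pow_add]; ring_nf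

theorem stmt11 : StronglyHopfian (mulAct S) ↔
    ∀ s : S, ∃ n : ℕ, 1 ≤ n ∧
      ∀ x y : S, s ^ n * x = s ^ n * y ↔ s ^ (n + 1) * x = s ^ (n + 1) * y := by
  constructor
  · intro H s
    have hend : IsEnd (mulAct S) (fun x => s * x) := by
      intro x t; simp [mulAct, mul_assoc]
    obtain ⟨n, hn1, hker⟩ := H _ hend
    have hs1 : (fun x => s * x) 1 = s := mul_one s
    refine ⟨n, hn1, fun x y => ⟨fun hxy => ?_, fun hxy => ?_⟩⟩
    · rw [pow_succ', mul_assoc, mul_assoc, hxy]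
    · have := hker (n + 1) (Nat.le_succ n)
      have hx := congrFun (congrFun this x) y
      have e : ∀ m (z : S), (fun x => s * x)^[m] z = s ^ m * z := fun m z => by
        rw [end_iter hend]; simp
      simp only [kerC, e] at hx
      exact hx.mp hxy
  · intro H f hf
    obtain ⟨n, hn1, hiff⟩ := H (f 1)
    refine ⟨n, hn1, fun m hm => ?_⟩
    obtain ⟨k, rfl⟩ := Nat.exists_eq_add_of_le hm
    funext x y
    simp only [kerC, end_iter hf]
    exact propext (stab_pow (fun x y => (hiff x y)) k x y)
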